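/- (q-Worpitzky identity) For positive integers α, β, all n ≥ 0 and j ≥ 0: Σ_{k=0}^{j} qbinom(j-k+n+α+β-1, j-k) · E_{n,k}(α,β,q) = qbinom(j+α+β-1, j) · [j+β]^n, where E_{n,k} is defined by the recurrence E_{0,0}=1, E_{n,k} = q^(β+k-1)[n-k+α]E_{n-1,k-1} + [k+β]E_{n-1,k}, E_{n,k}=0 for k<0 or k>n. (Terms with k > n vanish.) -/

import Mathlib

open Finset

noncomputable section

abbrev K : Type := RatFunc ℚ

def qq : K := RatFunc.X

def qint (m : ℕ) : K := ∑ i ∈ Finset.range m, qq ^ i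

def qfact (m : ℕ) : K := ∏ i ∈ Finset.range m, qint (i + 1)

def qbinom (a b : ℕ) : K := qfact a / (qfact b * qfact (a - b))

def E (α β : ℕ) : ℕ → ℕ → K
  | 0, k => if k = 0 then 1 else 0
  | n + 1, 0 => qint β * E α β n 0
  | n + 1, k + 1 =>
      qq ^ (β + k) * qint (n - k + α) * E α β n k + qint (k + 1 + β) * E α β n (k + 1)

def poch (N : ℕ) : PowerSeries K :=
  ∏ i ∈ Finset.range N, (1 - PowerSeries.C (qq ^ i) * PowerSeries.X)

lemma qint_ne_zero {m : ℕ} (h : 1 ≤ m) : qint m ≠ 0 := by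
  have h1 : qint m = algebraMap (Polynomial ℚ) K (∑ i ∈ Finset.range m, Polynomial.X ^ i) := by
    simp [qint, qq, map_sum, map_pow, RatFunc.algebraMap_X]
  rw [h1]
  apply RatFunc.algebraMap_ne_zero
  intro hp
  have := congrArg (fun p => Polynomial.coeff p 0) hp
  simp [Polynomial.finset_sum_coeff, Polynomial.coeff_X_pow] at this
  omega

lemma qfact_ne_zero (m : ℕ) : qfact m ≠ 0 := by
  apply Finset.prod_ne_zero_iff.mpr
  intro i _
  exact qint_ne_zero (by omega)

lemma qfact_succ (m : ℕ) : qfact (m + 1) = qfact m * qint (m + 1) :=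
  Finset.prod_range_succ _ _

lemma qint_add (x y : ℕ) : qint (x + y) = qint x + qq ^ x * qint y := by
  simp [qint, Finset.sum_range_add, Finset.mul_sum, pow_add]

lemma qbinom_zero (m : ℕ) : qbinom m 0 = 1 := by
  simp [qbinom, qfact]
  exact qfact_ne_zero m

lemma pascal (b c : ℕ) :
    qbinom (b + c + 2) (b + 1) = qbinom (b + c + 1) (b + 1) + qq ^ (c + 1) * qbinom (b + c + 1) b := by
  unfold qbinom
  rw [show b + c + 2 - (b + 1) = c + 1 by omega, show b + c + 1 - (b + 1) = c by omega,
    show b + c + 1 - b = c + 1 by omega,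
    show b + c + 2 = (b + c + 1) + 1 by ring, qfact_succ (b + c + 1),
    show (b + c + 1) + 1 = (c + 1) + (b + 1) by ring, qint_add,
    qfact_succ b, qfact_succ c]
  have h1 := qfact_ne_zero b
  have h2 := qfact_ne_zero c
  have h3 := qfact_ne_zero (b + c + 1)
  have h4 := qint_ne_zero (show 1 ≤ b + 1 by omega)
  have h5 := qint_ne_zero (show 1 ≤ c + 1 by omega)
  field_simp

lemma absorb (b c : ℕ) :
    qint (b + 1) * qbinom (b + c + 1) (b + 1) = qint (c + 1) * qbinom (b + c + 1) b := by
  unfold qbinom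
  rw [show b + c + 1 - (b + 1) = c by omega, show b + c + 1 - b = c + 1 by omega,
    qfact_succ b, qfact_succ c]
  have h1 := qfact_ne_zero b
  have h2 := qfact_ne_zero c
  have h3 := qfact_ne_zero (b + c + 1)
  have h4 := qint_ne_zero (show 1 ≤ b + 1 by omega)
  have h5 := qint_ne_zero (show 1 ≤ c + 1 by omega)
  field_simp

lemma key (α β k d e : ℕ) (hα : 1 ≤ α) :
    qbinom (d + (k + e) + α + β) d * (qq ^ (β + k) * qint (e + α)) +
      qint (k + β) * qbinom (d + (k + e) + α + β + 1) (d + 1) =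
    qint (k + d + 1 + β) * qbinom (d + (k + e) + α + β) (d + 1) := by
  obtain ⟨α', rfl⟩ : ∃ α', α = α' + 1 := ⟨α - 1, by omega⟩
  have h1 : d + (k + e) + (α' + 1) + β = d + (k + e + α' + β) + 1 := by omega
  have h2 : d + (k + e) + (α' + 1) + β + 1 = d + (k + e + α' + β) + 2 := by omega
  rw [h2, h1, pascal d (k + e + α' + β)]
  have habs := absorb d (k + e + α' + β)
  have hq1 : qint (k + d + 1 + β) = qint (k + β) + qq ^ (k + β) * qint (d + 1) := by
    rw [show k + d + 1 + β = (k + β) + (d + 1) by omega, qint_add]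
  have hq2 : qint (k + e + α' + β + 1) = qint (e + (α' + 1)) + qq ^ (e + (α' + 1)) * qint (k + β) := by
    rw [show k + e + α' + β + 1 = (e + (α' + 1)) + (k + β) by omega, qint_add]
  have hq3 : (qq : K) ^ (k + e + α' + β + 1) = qq ^ (β + k) * qq ^ (e + (α' + 1)) := by
    rw [← pow_add]; ring_nf
  rw [hq1]
  linear_combination (-(qq ^ (β + k))) * habs - qq ^ (β + k) * qbinom (d + (k + e + α' + β) + 1) d * hq2 + qint (k + β) * qbinom (d + (k + e + α' + β) + 1) d * hq3

lemma E_eq_zero (α β : ℕ) : ∀ n k, n < k → E α β n k = 0 := by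
  intro n
  induction n with
  | zero =>
    intro k hk
    simp only [E]
    rw [if_neg (by omega)]
  | succ n ih =>
    intro k hk
    match k, hk with
    | k + 1, hk =>
      simp only [E]
      rw [ih k (by omega), ih (k + 1) (by omega)]
      ring

theorem q_worpitzky (α β : ℕ) (hα : 1 ≤ α) (hβ : 1 ≤ β) (n j : ℕ) :
    ∑ k ∈ Finset.range (j + 1), qbinom (j - k + n + α + β - 1) (j - k) * E α β n k =
      qbinom (j + α + β - 1) j * qint (j + β) ^ n := by
  induction n with
  | zero =>
    rw [Finset.sum_eq_single 0]
    · simp [E]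
    · intro b _ hb
      simp [E, hb]
    · intro h
      simp at h
  | succ n ih =>
    calc ∑ k ∈ Finset.range (j + 1), qbinom (j - k + (n + 1) + α + β - 1) (j - k) * E α β (n + 1) k
        = ∑ k ∈ Finset.range (j + 1), qbinom (j - k + n + α + β) (j - k) * E α β (n + 1) k := by
          refine Finset.sum_congr rfl fun k _ => ?_
          rw [show j - k + (n + 1) + α + β - 1 = j - k + n + α + β by omega]
      _ = (∑ k ∈ Finset.range j,
            qbinom (j - (k + 1) + n + α + β) (j - (k + 1)) * E α β (n + 1) (k + 1))
          + qbinom (j - 0 + n + α + β) (j - 0) * E α β (n + 1) 0 :=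
          Finset.sum_range_succ' _ j
      _ = (∑ k ∈ Finset.range j,
            (qbinom (j - (k + 1) + n + α + β) (j - (k + 1)) * (qq ^ (β + k) * qint (n - k + α)) * E α β n k
             + qint ((k + 1) + β) * qbinom (j - (k + 1) + n + α + β) (j - (k + 1)) * E α β n (k + 1)))
          + qint (0 + β) * qbinom (j - 0 + n + α + β) (j - 0) * E α β n 0 := by
          congr 1
          · refine Finset.sum_congr rfl fun k _ => ?_
            simp only [E]
            ring
          · simp only [E]
            ring_nf
      _ = (∑ k ∈ Finset.range j,
            qbinom (j - (k + 1) + n + α + β) (j - (k + 1)) * (qq ^ (β + k) * qint (n - k + α)) * E α β n k)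
          + ((∑ k ∈ Finset.range j,
              qint ((k + 1) + β) * qbinom (j - (k + 1) + n + α + β) (j - (k + 1)) * E α β n (k + 1))
             + qint (0 + β) * qbinom (j - 0 + n + α + β) (j - 0) * E α β n 0) := by
          rw [Finset.sum_add_distrib]
          ring
      _ = (∑ k ∈ Finset.range j,
            qbinom (j - (k + 1) + n + α + β) (j - (k + 1)) * (qq ^ (β + k) * qint (n - k + α)) * E α β n k)
          + ∑ k ∈ Finset.range (j + 1), qint (k + β) * qbinom (j - k + n + α + β) (j - k) * E α β n k := by
          rw [Finset.sum_range_succ'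
            (fun k => qint (k + β) * qbinom (j - k + n + α + β) (j - k) * E α β n k) j]
      _ = (∑ k ∈ Finset.range j,
            (qbinom (j - (k + 1) + n + α + β) (j - (k + 1)) * (qq ^ (β + k) * qint (n - k + α)) * E α β n k
             + qint (k + β) * qbinom (j - k + n + α + β) (j - k) * E α β n k))
          + qint (j + β) * qbinom (j - j + n + α + β) (j - j) * E α β n j := by
          rw [Finset.sum_range_succ, Finset.sum_add_distrib]
          ring
      _ = (∑ k ∈ Finset.range j,
            qint (j + β) * (qbinom (j - k + n + α + β - 1) (j - k) * E α β n k))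
          + qint (j + β) * (qbinom (j - j + n + α + β - 1) (j - j) * E α β n j) := by
          congr 1
          · refine Finset.sum_congr rfl fun k hk => ?_
            rw [Finset.mem_range] at hk
            by_cases hkn : n < k
            · rw [E_eq_zero α β n k hkn]
              ring
            · obtain ⟨d, hdj⟩ : ∃ d, j - k = d + 1 := ⟨j - k - 1, by omega⟩
              obtain ⟨e, hen⟩ : ∃ e, n = k + e := ⟨n - k, by omega⟩
              rw [show j - k + n + α + β - 1 = d + (k + e) + α + β by omega,
                show j - (k + 1) + n + α + β = d + (k + e) + α + β by omega,
                show j - k + n + α + β = d + (k + e) + α + β + 1 by omega,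
                show j - (k + 1) = d by omega,
                show j - k = d + 1 by omega,
                show n - k + α = e + α by omega,
                show j + β = k + d + 1 + β by omega]
              linear_combination (E α β n k) * key α β k d e hα
          · simp [Nat.sub_self, qbinom_zero]
      _ = qint (j + β) * ∑ k ∈ Finset.range (j + 1),
            qbinom (j - k + n + α + β - 1) (j - k) * E α β n k := by
          rw [Finset.sum_range_succ, mul_add, Finset.mul_sum]
      _ = qbinom (j + α + β - 1) j * qint (j + β) ^ (n + 1) := by
          rw [ih]
          ring

end
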